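/- For the 2×n grid graph G_{2×n} with n ≥ 2 and 2 ≤ k ≤ n, every facet σ of the deletion of b_n in Δₖᵗ(G_{2×n}) contains a_{n-1} or b_{n-1}; equivalently, del(b_n) = st_{del(b_n)}(a_{n-1}) ∪ st_{del(b_n)}(b_{n-1}). -/

import Mathlib

open Finset

attribute [local instance] Classical.propDecidable

variable {V : Type*}

def gridGraph (m n : ℕ) : SimpleGraph (Fin m × Fin n) where
  Adj u v := (u.1 = v.1 ∧ (u.2.1 + 1 = v.2.1 ∨ v.2.1 + 1 = u.2.1)) ∨
             (u.2 = v.2 ∧ (u.1.1 + 1 = v.1.1 ∨ v.1.1 + 1 = u.1.1))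
  symm := by
    constructor
    intro u v h
    rcases h with ⟨h1, h2⟩ | ⟨h1, h2⟩
    · exact Or.inl ⟨h1.symm, h2.symm⟩
    · exact Or.inr ⟨h1.symm, h2.symm⟩
  loopless := by
    constructor
    intro u h
    rcases h with ⟨-, h | h⟩ | ⟨-, h | h⟩ <;> omega

def IsIndep (G : SimpleGraph V) (S : Finset V) : Prop := ∀ u ∈ S, ∀ v ∈ S, ¬ G.Adj u v

def totalCutComplex [Fintype V] (G : SimpleGraph V) (k : ℕ) : Set (Finset V) :=
  {σ | ∃ S : Finset V, S ⊆ σᶜ ∧ S.card = k ∧ IsIndep G S}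

def cutComplex [Fintype V] (G : SimpleGraph V) (k : ℕ) : Set (Finset V) :=
  {σ | ∃ S : Finset V, S ⊆ σᶜ ∧ S.card = k ∧ ¬ (G.induce (S : Set V)).Connected}

def linkC (K : Set (Finset V)) (W : Finset V) : Set (Finset V) :=
  {τ | τ ∩ W = ∅ ∧ τ ∪ W ∈ K}

def delC (K : Set (Finset V)) (v : V) : Set (Finset V) := {σ ∈ K | v ∉ σ}

def starC (K : Set (Finset V)) (F : Finset V) : Set (Finset V) := {σ ∈ K | σ ∪ F ∈ K}

def IsFacet (K : Set (Finset V)) (σ : Finset V) : Prop :=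
  σ ∈ K ∧ ∀ τ ∈ K, σ ⊆ τ → σ = τ

def geomReal [Fintype V] (K : Set (Finset V)) : Set (V → ℝ) :=
  {f | (∀ v, 0 ≤ f v) ∧ (∑ v, f v) = 1 ∧ ∃ σ ∈ K, ∀ v, f v ≠ 0 → v ∈ σ}

def nSphere (d : ℕ) : Set (EuclideanSpace ℝ (Fin (d + 1))) := Metric.sphere 0 1

noncomputable def spherePt (d : ℕ) : ↥(nSphere d) :=
  ⟨EuclideanSpace.single 0 1, by simp [nSphere, EuclideanSpace.norm_single]⟩

def wedgeRel (N d : ℕ) (a b : (Σ _ : Fin N, ↥(nSphere d)) ⊕ Unit) : Prop :=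
  a = b ∨ ((a = Sum.inr () ∨ ∃ i, a = Sum.inl ⟨i, spherePt d⟩) ∧
           (b = Sum.inr () ∨ ∃ i, b = Sum.inl ⟨i, spherePt d⟩))

def wedgeOfSpheres (N d : ℕ) : Type := Quot (wedgeRel N d)

noncomputable instance (N d : ℕ) : TopologicalSpace (wedgeOfSpheres N d) := by
  unfold wedgeOfSpheres; infer_instance


/-- In the total `k`-cut complex of the `2 × n` grid graph, every facet of the
deletion of `b_n` contains `a_{n-1}` or `b_{n-1}`; equivalently, the deletion of
`b_n` is the union of the stars of `a_{n-1}` and of `b_{n-1}` in it.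
(Rows: `0 = a`, `1 = b`; columns are `0`-indexed.) -/
theorem del_bn_eq_union_stars (n k : ℕ) (hn : 2 ≤ n) (hk2 : 2 ≤ k) (hkn : k ≤ n) :
    (∀ σ, IsFacet (delC (totalCutComplex (gridGraph 2 n) k)
        ((1 : Fin 2), (⟨n - 1, by omega⟩ : Fin n))) σ →
      ((0 : Fin 2), (⟨n - 2, by omega⟩ : Fin n)) ∈ σ ∨
      ((1 : Fin 2), (⟨n - 2, by omega⟩ : Fin n)) ∈ σ) ∧
    delC (totalCutComplex (gridGraph 2 n) k) ((1 : Fin 2), (⟨n - 1, by omega⟩ : Fin n)) =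
      starC (delC (totalCutComplex (gridGraph 2 n) k) ((1 : Fin 2), (⟨n - 1, by omega⟩ : Fin n)))
        {((0 : Fin 2), (⟨n - 2, by omega⟩ : Fin n))} ∪
      starC (delC (totalCutComplex (gridGraph 2 n) k) ((1 : Fin 2), (⟨n - 1, by omega⟩ : Fin n)))
        {((1 : Fin 2), (⟨n - 2, by omega⟩ : Fin n))} := by
  have hDE : (fun (x y : Fin 2 × Fin n) => Classical.propDecidable (x = y))
      = (instDecidableEqProd : DecidableEq (Fin 2 × Fin n)) := Subsingleton.elim _ _
  set bn : Fin 2 × Fin n := ((1 : Fin 2), (⟨n - 1, by omega⟩ : Fin n)) with hbn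
  set a : Fin 2 × Fin n := ((0 : Fin 2), (⟨n - 2, by omega⟩ : Fin n)) with ha
  set b : Fin 2 × Fin n := ((1 : Fin 2), (⟨n - 2, by omega⟩ : Fin n)) with hb
  have hab : (gridGraph 2 n).Adj a b := Or.inr ⟨rfl, Or.inl rfl⟩
  have hbna : bn ≠ a := by
    intro h
    have := congrArg (fun p => (Prod.snd p).val) h
    simp only [hbn, ha] at this
    omega
  have hbnb : bn ≠ b := by
    intro h
    have := congrArg (fun p => (Prod.snd p).val) h
    simp only [hbn, hb] at this
    omega
  set K := delC (totalCutComplex (gridGraph 2 n) k) bn with hK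
  have main : ∀ σ ∈ K, σ ∈ starC K {a} ∨ σ ∈ starC K {b} := by
    rintro σ hσK
    obtain ⟨⟨S, hSsub, hScard, hSind⟩, hbnσ⟩ := hσK
    have hSsub' := hSsub
    rw [hDE] at hSsub'
    by_cases haS : a ∈ S
    · right
      refine ⟨⟨⟨S, hSsub, hScard, hSind⟩, hbnσ⟩, ⟨S, ?_, hScard, hSind⟩, ?_⟩
      · rw [hDE]
        intro x hx
        have h1 : x ∉ σ := Finset.mem_compl.mp (hSsub' hx)
        have h2 : x ≠ b := fun h => hSind a haS b (h ▸ hx) hab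
        rw [Finset.mem_compl, Finset.mem_union, Finset.mem_singleton]
        push_neg
        exact ⟨h1, h2⟩
      · rw [hDE]
        rw [Finset.mem_union, Finset.mem_singleton]
        push_neg
        exact ⟨hbnσ, hbnb⟩
    · left
      refine ⟨⟨⟨S, hSsub, hScard, hSind⟩, hbnσ⟩, ⟨S, ?_, hScard, hSind⟩, ?_⟩
      · rw [hDE]
        intro x hx
        have h1 : x ∉ σ := Finset.mem_compl.mp (hSsub' hx)
        have h2 : x ≠ a := fun h => haS (h ▸ hx)
        rw [Finset.mem_compl, Finset.mem_union, Finset.mem_singleton]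
        push_neg
        exact ⟨h1, h2⟩
      · rw [hDE]
        rw [Finset.mem_union, Finset.mem_singleton]
        push_neg
        exact ⟨hbnσ, hbna⟩
  constructor
  · rintro σ ⟨hσK, hmax⟩
    rcases main σ hσK with h | h
    · left
      have h2 := h.2
      rw [hDE] at h2
      have heq := hmax _ h2 Finset.subset_union_left
      rw [heq]
      exact Finset.mem_union_right _ (Finset.mem_singleton_self a)
    · right
      have h2 := h.2
      rw [hDE] at h2
      have heq := hmax _ h2 Finset.subset_union_left
      rw [heq]
      exact Finset.mem_union_right _ (Finset.mem_singleton_self b)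
  · ext σ
    constructor
    · intro hσ
      exact main σ hσ
    · intro h
      rcases h with h | h <;> exact h.1
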